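/- For $a, \xi \geq 0$ set $a^\xi = (a-\xi)^+$, $a^{\xi*} = 1 + a^\xi$, and $\Phi(s) = (1+s)\ln(1+s) - s$. For all $0 \leq \zeta < \xi$ and $a \geq 0$: $\xi \ln(a^{\xi*}) \leq \frac{2\xi}{\xi - \zeta} \Phi(a^\zeta)$. -/

import Mathlib

-- Φ(s) := (1+s) log(1+s) - s is nonnegative for s ≥ 0
lemma phi_nonneg (s : ℝ) (hs : 0 ≤ s) : 0 ≤ (1 + s) * Real.log (1 + s) - s := by
  have h1 : (0:ℝ) < 1 + s := by linarith
  have h2 : Real.log ((1 + s)⁻¹) ≤ (1 + s)⁻¹ - 1 :=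
    Real.log_le_sub_one_of_pos (by positivity)
  rw [Real.log_inv] at h2
  have h3 : s / (1 + s) ≤ Real.log (1 + s) := by
    have : (1:ℝ) - (1+s)⁻¹ = s / (1+s) := by field_simp; ring
    linarith [this ▸ (by linarith : 1 - (1+s)⁻¹ ≤ Real.log (1+s))]
  have h4 : s ≤ (1 + s) * Real.log (1 + s) := by
    calc s = (1 + s) * (s / (1 + s)) := by field_simp
    _ ≤ (1 + s) * Real.log (1 + s) := by
        exact mul_le_mul_of_nonneg_left h3 (le_of_lt h1)
  linarith

theorem xi_log_truncation_bound (ζ ξ a : ℝ) (hζ : 0 ≤ ζ) (hζξ : ζ < ξ) (ha : 0 ≤ a) :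
    ξ * Real.log (1 + (a - ξ)⁺) ≤
      2 * ξ / (ξ - ζ) * ((1 + (a - ζ)⁺) * Real.log (1 + (a - ζ)⁺) - (a - ζ)⁺) := by
  have hξ : 0 < ξ := lt_of_le_of_lt hζ hζξ
  have hd : 0 < ξ - ζ := sub_pos.mpr hζξ
  have hs : 0 ≤ (a - ζ)⁺ := posPart_nonneg _
  have hΦs : 0 ≤ (1 + (a - ζ)⁺) * Real.log (1 + (a - ζ)⁺) - (a - ζ)⁺ := phi_nonneg _ hs
  by_cases h : a ≤ ξ
  · have ht : (a - ξ)⁺ = 0 := posPart_eq_zero.mpr (by linarith)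
    rw [ht]
    simp only [add_zero, Real.log_one, mul_zero]
    positivity
  · push_neg at h
    have ht : (a - ξ)⁺ = a - ξ := posPart_eq_self.mpr (by linarith)
    have hsv : (a - ζ)⁺ = a - ζ := posPart_eq_self.mpr (by linarith)
    rw [ht, hsv]
    set t := a - ξ with htdef
    set s := a - ζ with hsdef
    have ht0 : 0 < t := by simp [htdef]; linarith
    have hst : s = t + (ξ - ζ) := by rw [hsdef, htdef]; ring
    have h1t : (0:ℝ) < 1 + t := by linarith
    have h1s : (0:ℝ) < 1 + s := by rw [hst]; linarith
    -- log((1+t)/(1+s)) ≤ (1+t)/(1+s) - 1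
    have key : Real.log ((1+t)/(1+s)) ≤ (1+t)/(1+s) - 1 :=
      Real.log_le_sub_one_of_pos (by positivity)
    rw [Real.log_div (by linarith) (by linarith)] at key
    -- multiply by (1+s) > 0 : (1+s)(log(1+t) - log(1+s)) ≤ (1+t) - (1+s) = -(ξ-ζ)
    have key2 : (1+s) * (Real.log (1+t) - Real.log (1+s)) ≤ (1+t) - (1+s) := by
      have := mul_le_mul_of_nonneg_left key (le_of_lt h1s)
      calc (1+s) * (Real.log (1+t) - Real.log (1+s))
          ≤ (1+s) * ((1+t)/(1+s) - 1) := this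
        _ = (1+t) - (1+s) := by field_simp
    -- Φ(t) ≥ 0
    have hΦt : 0 ≤ (1 + t) * Real.log (1 + t) - t := phi_nonneg t (le_of_lt ht0)
    -- (ξ-ζ) * log(1+t) ≤ Φ(s)
    have key3 : (ξ - ζ) * Real.log (1+t) ≤ (1+s) * Real.log (1+s) - s := by
      nlinarith [key2, hΦt, hst]
    -- conclude
    have hlog : 0 ≤ Real.log (1+t) := Real.log_nonneg (by linarith)
    have step : ξ * Real.log (1+t) ≤ ξ / (ξ - ζ) * ((1+s) * Real.log (1+s) - s) := by
      rw [div_mul_eq_mul_div, le_div_iff₀ hd]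
      nlinarith [mul_le_mul_of_nonneg_left key3 (le_of_lt hξ)]
    have hΦs' : 0 ≤ (1+s) * Real.log (1+s) - s := phi_nonneg s (by rw [hst]; linarith)
    have : ξ / (ξ - ζ) * ((1+s) * Real.log (1+s) - s)
         ≤ 2 * ξ / (ξ - ζ) * ((1+s) * Real.log (1+s) - s) := by
      apply mul_le_mul_of_nonneg_right _ hΦs'
      gcongr
      linarith
    linarith
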